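/- Fix μ > 0, λ > 0, a finite index set E, positive weights ω_l for l ∈ E, vectors c_l ∈ ℝ^n with ‖c_l‖₂ = √2 for each l ∈ E, and a matrix X ∈ ℝ^{p×n}. Define G : ℝ^{p×n} → ℝ^{p×n} by G(U) := U − X + λ Σ_{l∈E} ω_l P₂(U c_l / μ) (c_l)ᵀ, where P₂(v) := v if ‖v‖₂ ≤ 1 and P₂(v) := v/‖v‖₂ otherwise, and where P₂(U c_l / μ)(c_l)ᵀ denotes the p×n rank-one matrix formed as the outer product of the column vector P₂(U c_l/μ) ∈ ℝ^p and c_l ∈ ℝ^n. Then for all U, V ∈ ℝ^{p×n}, ‖G(U) − G(V)‖_F ≤ (1 + (2λ Σ_{l∈E} ω_l)/μ) ‖U − V‖_F, where ‖·‖_F is the Frobenius norm. -/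

import Mathlib

/-- Euclidean norm of a vector in `ℝ^m`. -/
noncomputable def enorm2 {m : ℕ} (x : Fin m → ℝ) : ℝ := Real.sqrt (∑ i, x i ^ 2)

/-- Frobenius norm of a `p × n` real matrix. -/
noncomputable def frob {p n : ℕ} (U : Fin p → Fin n → ℝ) : ℝ :=
  Real.sqrt (∑ i, ∑ j, U i j ^ 2)

/-- Matrix-vector product. -/
noncomputable def mulVecF {p n : ℕ} (U : Fin p → Fin n → ℝ) (c : Fin n → ℝ) : Fin p → ℝ :=
  fun i => ∑ j, U i j * c j

/-- Projection onto the closed Euclidean unit ball. -/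
noncomputable def proj2 {m : ℕ} (v : Fin m → ℝ) : Fin m → ℝ :=
  if enorm2 v ≤ 1 then v else fun i => v i / enorm2 v

open Finset RealInnerProductSpace in
theorem ball_lip {F : Type*} [NormedAddCommGroup F] [InnerProductSpace ℝ F] (a b : F) :
    ‖(max 1 ‖a‖)⁻¹ • a - (max 1 ‖b‖)⁻¹ • b‖ ≤ ‖a - b‖ := by
  set Pa := (max 1 ‖a‖)⁻¹ • a with hPa
  set Pb := (max 1 ‖b‖)⁻¹ • b with hPb
  have key : ∀ (x : F) (y : F), ‖y‖ ≤ 1 →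
      (inner ℝ (x - (max 1 ‖x‖)⁻¹ • x) (y - (max 1 ‖x‖)⁻¹ • x) : ℝ) ≤ 0 := by
    intro x y hy
    rcases le_or_gt ‖x‖ 1 with h | h
    · simp [max_eq_left h]
    · have hx : max 1 ‖x‖ = ‖x‖ := max_eq_right h.le
      rw [hx]
      have hx0 : (0:ℝ) < ‖x‖ := lt_trans one_pos h
      have : x - ‖x‖⁻¹ • x = (1 - ‖x‖⁻¹) • x := by
        rw [sub_smul, one_smul]
      rw [this, real_inner_smul_left, inner_sub_right, real_inner_smul_right,
        real_inner_self_eq_norm_sq]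
      have h1 : (inner ℝ (x) (y) : ℝ) ≤ ‖x‖ := by
        calc (inner ℝ (x) (y) : ℝ) ≤ ‖x‖ * ‖y‖ := real_inner_le_norm x y
        _ ≤ ‖x‖ * 1 := by nlinarith
        _ = ‖x‖ := mul_one _
      have h2 : ‖x‖⁻¹ * ‖x‖^2 = ‖x‖ := by field_simp
      have h3 : (0:ℝ) ≤ 1 - ‖x‖⁻¹ := by
        have : ‖x‖⁻¹ ≤ 1 := by
          rw [inv_le_one_iff₀]; right; exact h.le
        linarith
      nlinarith
  have hPb1 : ‖Pb‖ ≤ 1 := by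
    rw [hPb, norm_smul, norm_inv, Real.norm_eq_abs, abs_of_pos (lt_max_of_lt_left one_pos)]
    rw [inv_mul_le_iff₀ (lt_max_of_lt_left one_pos), mul_one]
    exact le_max_right _ _
  have hPa1 : ‖Pa‖ ≤ 1 := by
    rw [hPa, norm_smul, norm_inv, Real.norm_eq_abs, abs_of_pos (lt_max_of_lt_left one_pos)]
    rw [inv_mul_le_iff₀ (lt_max_of_lt_left one_pos), mul_one]
    exact le_max_right _ _
  have h1 := key a Pb hPb1
  have h2 := key b Pa hPa1
  have hsum : ‖Pa - Pb‖^2 ≤ (inner ℝ (a - b) (Pa - Pb) : ℝ) := by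
    have e1 : (inner ℝ (a - Pa) (Pb - Pa) : ℝ) + (inner ℝ (b - Pb) (Pa - Pb) : ℝ)
        = (inner ℝ ((a - b) - (Pa - Pb)) (Pb - Pa) : ℝ) := by
      simp only [inner_sub_left, inner_sub_right]
      ring
    have e2 : (inner ℝ ((a - b) - (Pa - Pb)) (Pb - Pa) : ℝ) ≤ 0 := by
      rw [← e1]; linarith
    have e3 : (inner ℝ ((a - b) - (Pa - Pb)) (Pa - Pb) : ℝ) ≥ 0 := by
      nth_rewrite 2 [← neg_sub Pb Pa]
      rw [inner_neg_right]
      linarith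
    rw [inner_sub_left] at e3
    rw [← real_inner_self_eq_norm_sq]
    linarith
  have hcs : (inner ℝ (a - b) (Pa - Pb) : ℝ) ≤ ‖a - b‖ * ‖Pa - Pb‖ := real_inner_le_norm _ _
  rcases eq_or_lt_of_le (norm_nonneg (Pa - Pb)) with h0 | h0
  · rw [← h0] at *; simpa using norm_nonneg (a - b)
  · nlinarith

noncomputable def toV {m : ℕ} (x : Fin m → ℝ) : EuclideanSpace ℝ (Fin m) :=
  (WithLp.equiv 2 _).symm x

noncomputable def toM {p n : ℕ} (U : Fin p → Fin n → ℝ) : EuclideanSpace ℝ (Fin p × Fin n) :=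
  (WithLp.equiv 2 _).symm (fun q => U q.1 q.2)

lemma enorm2_eq {m : ℕ} (x : Fin m → ℝ) : enorm2 x = ‖toV x‖ := by
  rw [EuclideanSpace.norm_eq]
  simp [enorm2, toV, sq_abs]

lemma frob_eq {p n : ℕ} (U : Fin p → Fin n → ℝ) : frob U = ‖toM U‖ := by
  rw [EuclideanSpace.norm_eq]
  simp [frob, toM, sq_abs, Fintype.sum_prod_type]

lemma toV_sub {m : ℕ} (x y : Fin m → ℝ) : toV (x - y) = toV x - toV y := rfl

lemma mulVec_bound {p n : ℕ} (W : Fin p → Fin n → ℝ) (c : Fin n → ℝ) :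
    enorm2 (mulVecF W c) ≤ frob W * enorm2 c := by
  unfold enorm2 frob mulVecF
  rw [← Real.sqrt_mul (by positivity)]
  apply Real.sqrt_le_sqrt
  rw [Finset.sum_mul]
  exact Finset.sum_le_sum fun i _ => Finset.sum_mul_sq_le_sq_mul_sq _ _ _

lemma proj2_eq {m : ℕ} (v : Fin m → ℝ) :
    toV (proj2 v) = (max 1 ‖toV v‖)⁻¹ • toV v := by
  by_cases h : enorm2 v ≤ 1
  · rw [proj2, if_pos h, ← enorm2_eq, max_eq_left h]
    simp
  · rw [proj2, if_neg h, ← enorm2_eq, max_eq_right (le_of_not_ge h)]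
    ext i
    simp [toV, div_eq_inv_mul]

lemma frob_outer {p n : ℕ} (v : Fin p → ℝ) (c : Fin n → ℝ) :
    frob (fun i j => v i * c j) = enorm2 v * enorm2 c := by
  unfold frob enorm2
  rw [← Real.sqrt_mul (by positivity)]
  congr 1
  rw [Finset.sum_mul_sum]
  simp [mul_pow]

lemma enorm2_nonneg {m : ℕ} (x : Fin m → ℝ) : 0 ≤ enorm2 x := Real.sqrt_nonneg _


lemma frob_nonneg {p n : ℕ} (A : Fin p → Fin n → ℝ) : 0 ≤ frob A := Real.sqrt_nonneg _

lemma frob_add_le {p n : ℕ} (A B : Fin p → Fin n → ℝ) :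
    frob (fun i j => A i j + B i j) ≤ frob A + frob B := by
  rw [frob_eq, frob_eq, frob_eq]
  have h : toM (fun i j => A i j + B i j) = toM A + toM B := rfl
  rw [h]; exact norm_add_le _ _

lemma frob_smul (t : ℝ) {p n : ℕ} (A : Fin p → Fin n → ℝ) :
    frob (fun i j => t * A i j) = |t| * frob A := by
  rw [frob_eq, frob_eq]
  have h : toM (fun i j => t * A i j) = t • toM A := rfl
  rw [h, norm_smul, Real.norm_eq_abs]

lemma frob_sum_le {p n : ℕ} {ι : Type*} (s : Finset ι) (f : ι → Fin p → Fin n → ℝ) :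
    frob (fun i j => ∑ l ∈ s, f l i j) ≤ ∑ l ∈ s, frob (f l) := by
  classical
  induction s using Finset.induction with
  | empty => simp [frob]
  | insert _ _ h ih =>
    simp only [Finset.sum_insert h]
    exact le_trans (frob_add_le _ _) (by linarith)

lemma enorm2_smul (t : ℝ) {m : ℕ} (x : Fin m → ℝ) : enorm2 (t • x) = |t| * enorm2 x := by
  rw [enorm2_eq, enorm2_eq]
  have h : toV (t • x) = t • toV x := rfl
  rw [h, norm_smul, Real.norm_eq_abs]

lemma proj2_lip {m : ℕ} (a b : Fin m → ℝ) :
    enorm2 (fun i => proj2 a i - proj2 b i) ≤ enorm2 (a - b) := by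
  rw [enorm2_eq, enorm2_eq]
  have h1 : toV (fun i => proj2 a i - proj2 b i) = toV (proj2 a) - toV (proj2 b) := rfl
  have h2 : toV (a - b) = toV a - toV b := rfl
  rw [h1, h2, proj2_eq, proj2_eq]
  exact ball_lip (toV a) (toV b)

/-- The gradient map `G(U) = U - X + λ Σ_l ω_l P₂(U c_l/μ) c_lᵀ` is Lipschitz with constant
`1 + 2λ(Σ_l ω_l)/μ` in the Frobenius norm. -/
theorem stmt6 {p n : ℕ} {ι : Type*} (E : Finset ι) (μ lam : ℝ) (hμ : 0 < μ) (hlam : 0 < lam)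
    (ω : ι → ℝ) (hω : ∀ l ∈ E, 0 < ω l) (c : ι → Fin n → ℝ)
    (hc : ∀ l ∈ E, enorm2 (c l) = Real.sqrt 2) (X : Fin p → Fin n → ℝ) :
    ∀ U V : Fin p → Fin n → ℝ,
      frob ((fun i j => U i j - X i j
              + lam * ∑ l ∈ E, ω l * (proj2 (μ⁻¹ • mulVecF U (c l)) i * c l j))
            - fun i j => V i j - X i j
              + lam * ∑ l ∈ E, ω l * (proj2 (μ⁻¹ • mulVecF V (c l)) i * c l j))
        ≤ (1 + 2 * lam * (∑ l ∈ E, ω l) / μ) * frob (U - V) := by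
  intro U V
  set W : Fin p → Fin n → ℝ := fun i j => U i j - V i j with hW
  set pU : ι → Fin p → ℝ := fun l => proj2 (μ⁻¹ • mulVecF U (c l)) with hpU
  set pV : ι → Fin p → ℝ := fun l => proj2 (μ⁻¹ • mulVecF V (c l)) with hpV
  have hUV : frob (U - V) = frob W := rfl
  have key : ((fun i j => U i j - X i j
              + lam * ∑ l ∈ E, ω l * (pU l i * c l j))
            - fun i j => V i j - X i j
              + lam * ∑ l ∈ E, ω l * (pV l i * c l j))
      = fun i j => W i j + ∑ l ∈ E, (lam * ω l) * ((pU l i - pV l i) * c l j) := by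
    funext i j
    have hs : ∀ i j, lam * (∑ l ∈ E, ω l * (pU l i * c l j))
        - lam * (∑ l ∈ E, ω l * (pV l i * c l j))
        = ∑ l ∈ E, (lam * ω l) * ((pU l i - pV l i) * c l j) := by
      intro i j
      rw [Finset.mul_sum, Finset.mul_sum, ← Finset.sum_sub_distrib]
      exact Finset.sum_congr rfl fun l _ => by ring
    simp only [Pi.sub_apply]
    rw [← hs i j, hW]
    ring
  rw [hUV, key]
  -- bound each summand
  have hterm : ∀ l ∈ E, frob (fun i j => (lam * ω l) * ((pU l i - pV l i) * c l j))
      ≤ 2 * lam * ω l / μ * frob W := by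
    intro l hl
    rw [frob_smul, frob_outer]
    have hωl := hω l hl
    have habs : |lam * ω l| = lam * ω l := abs_of_pos (by positivity)
    rw [habs, hc l hl]
    have hlip : enorm2 (fun i => pU l i - pV l i)
        ≤ enorm2 (μ⁻¹ • mulVecF U (c l) - μ⁻¹ • mulVecF V (c l)) := proj2_lip _ _
    have hdiff : μ⁻¹ • mulVecF U (c l) - μ⁻¹ • mulVecF V (c l)
        = μ⁻¹ • mulVecF W (c l) := by
      funext i
      simp only [Pi.sub_apply, Pi.smul_apply, smul_eq_mul, mulVecF, hW]
      rw [← mul_sub, ← Finset.sum_sub_distrib]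
      congr 1
      exact Finset.sum_congr rfl fun j _ => by ring
    rw [hdiff, enorm2_smul, abs_of_pos (by positivity : (0:ℝ) < μ⁻¹)] at hlip
    have hmv : enorm2 (mulVecF W (c l)) ≤ frob W * enorm2 (c l) := mulVec_bound _ _
    rw [hc l hl] at hmv
    have h2 : Real.sqrt 2 * Real.sqrt 2 = 2 := Real.mul_self_sqrt (by norm_num)
    have hd : enorm2 (fun i => pU l i - pV l i) ≤ μ⁻¹ * (frob W * Real.sqrt 2) := by
      calc enorm2 (fun i => pU l i - pV l i) ≤ μ⁻¹ * enorm2 (mulVecF W (c l)) := hlip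
      _ ≤ μ⁻¹ * (frob W * Real.sqrt 2) := by
          apply mul_le_mul_of_nonneg_left hmv (by positivity)
    calc lam * ω l * (enorm2 (fun i => pU l i - pV l i) * Real.sqrt 2)
        ≤ lam * ω l * ((μ⁻¹ * (frob W * Real.sqrt 2)) * Real.sqrt 2) := by
          apply mul_le_mul_of_nonneg_left _ (by positivity)
          exact mul_le_mul_of_nonneg_right hd (Real.sqrt_nonneg 2)
      _ = lam * ω l * (μ⁻¹ * frob W * (Real.sqrt 2 * Real.sqrt 2)) := by ring
      _ = 2 * lam * ω l / μ * frob W := by rw [h2]; field_simp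
  calc frob (fun i j => W i j + ∑ l ∈ E, (lam * ω l) * ((pU l i - pV l i) * c l j))
      ≤ frob W + frob (fun i j => ∑ l ∈ E, (lam * ω l) * ((pU l i - pV l i) * c l j)) :=
        frob_add_le _ _
    _ ≤ frob W + ∑ l ∈ E, frob (fun i j => (lam * ω l) * ((pU l i - pV l i) * c l j)) := by
        have := frob_sum_le E (fun l i j => (lam * ω l) * ((pU l i - pV l i) * c l j))
        linarith
    _ ≤ frob W + ∑ l ∈ E, 2 * lam * ω l / μ * frob W := by
        have := Finset.sum_le_sum hterm
        linarith
    _ = (1 + 2 * lam * (∑ l ∈ E, ω l) / μ) * frob W := by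
        have h : ∑ l ∈ E, 2 * lam * ω l / μ = 2 * lam * (∑ l ∈ E, ω l) / μ := by
          rw [Finset.mul_sum, Finset.sum_div]
        rw [← Finset.sum_mul, h]
        ring
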